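/- For each i ∈ {1,2,3}, the partial derivative ∂ᵢW of W(x) = √3(1+3|x|²)^(−1/2) satisfies (Δ + 5W⁴)(∂ᵢW) = 0 pointwise on ℝ³. -/

import Mathlib

open MeasureTheory

/-- The ground state soliton `W(x) = √3 (1 + 3|x|²)^(-1/2)` on `ℝ³`. -/
noncomputable def W (x : Fin 3 → ℝ) : ℝ :=
  Real.sqrt 3 * (1 + 3 * ∑ i, x i ^ 2) ^ (-(1 : ℝ) / 2)

/-- The `i`-th partial derivative of a function on `ℝ³`. -/
noncomputable def pderiv3 (i : Fin 3) (f : (Fin 3 → ℝ) → ℝ) (x : Fin 3 → ℝ) : ℝ :=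
  fderiv ℝ f x (Pi.single i 1)

/-- The Euclidean Laplacian on `ℝ³`, `Δf = ∑ᵢ ∂ᵢ∂ᵢ f`. -/
noncomputable def laplacian3 (f : (Fin 3 → ℝ) → ℝ) (x : Fin 3 → ℝ) : ℝ :=
  ∑ i, pderiv3 i (pderiv3 i f) x

/-- `ΛW = (1/2)W + x·∇W`, the scaling derivative of the soliton. -/
noncomputable def LamW (x : Fin 3 → ℝ) : ℝ :=
  (1 / 2) * W x + ∑ i, x i * pderiv3 i W x

namespace SolitonAux

noncomputable def qq (x : Fin 3 → ℝ) : ℝ := 1 + 3 * ∑ i, x i ^ 2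

lemma qq_pos (x : Fin 3 → ℝ) : 0 < qq x := by
  have : 0 ≤ ∑ i, x i ^ 2 := Finset.sum_nonneg fun i _ => sq_nonneg _
  unfold qq; linarith

noncomputable def dq (x : Fin 3 → ℝ) : (Fin 3 → ℝ) →L[ℝ] ℝ :=
  ∑ j, (6 * x j) • (ContinuousLinearMap.proj j : (Fin 3 → ℝ) →L[ℝ] ℝ)

lemma dq_apply (x : Fin 3 → ℝ) (j : Fin 3) : dq x (Pi.single j 1) = 6 * x j := by
  simp [dq, ContinuousLinearMap.sum_apply, Pi.single_apply]

lemma hasFD_qq (x : Fin 3 → ℝ) : HasFDerivAt qq (dq x) x := by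
  have h : ∀ j : Fin 3, HasFDerivAt (fun y : Fin 3 → ℝ => y j ^ 2)
      ((x j • (ContinuousLinearMap.proj j : (Fin 3 → ℝ) →L[ℝ] ℝ)) +
       (x j • (ContinuousLinearMap.proj j : (Fin 3 → ℝ) →L[ℝ] ℝ))) x := by
    intro j
    have := ((ContinuousLinearMap.proj j : (Fin 3 → ℝ) →L[ℝ] ℝ).hasFDerivAt (x := x)).mul
      ((ContinuousLinearMap.proj j : (Fin 3 → ℝ) →L[ℝ] ℝ).hasFDerivAt (x := x))
    simpa [sq, Pi.mul_def] using this
  have hsum := HasFDerivAt.sum (u := Finset.univ) (fun j _ => h j)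
  have := (hsum.const_mul (3:ℝ)).const_add 1
  convert this using 1
  case e'_12 =>
    ext v
    simp [dq, ContinuousLinearMap.sum_apply, Finset.mul_sum]
    exact Finset.sum_congr rfl fun _ _ => by ring
  all_goals rfl

noncomputable def Fc (c : ℝ) (x : Fin 3 → ℝ) : ℝ := qq x ^ c

lemma hasFD_Fc (c : ℝ) (x : Fin 3 → ℝ) :
    HasFDerivAt (Fc c) ((c * qq x ^ (c - 1)) • dq x) x :=
  (hasFD_qq x).rpow_const (Or.inl (qq_pos x).ne')

lemma pderiv3_eq {f : (Fin 3 → ℝ) → ℝ} {f' : (Fin 3 → ℝ) →L[ℝ] ℝ} {x : Fin 3 → ℝ}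
    (h : HasFDerivAt f f' x) (j : Fin 3) : pderiv3 j f x = f' (Pi.single j 1) := by
  rw [pderiv3, h.fderiv]

lemma pderivW (i : Fin 3) (x : Fin 3 → ℝ) :
    pderiv3 i W x = (-3 * Real.sqrt 3) * (x i * Fc (-(3:ℝ)/2) x) := by
  have hW : HasFDerivAt W
      ((Real.sqrt 3 : ℝ) • ((-(1:ℝ)/2 * qq x ^ (-(1:ℝ)/2 - 1)) • dq x)) x :=
    (hasFD_Fc (-(1:ℝ)/2) x).const_mul _
  rw [pderiv3_eq hW, ContinuousLinearMap.smul_apply, ContinuousLinearMap.smul_apply,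
    dq_apply]
  have : (-(1:ℝ)/2 - 1) = -(3:ℝ)/2 := by norm_num
  rw [this]
  simp [Fc]; ring

noncomputable def W1 (i : Fin 3) (x : Fin 3 → ℝ) : ℝ := (-3 * Real.sqrt 3) * (x i * Fc (-(3:ℝ)/2) x)

lemma pderivW_fun (i : Fin 3) : pderiv3 i W = W1 i := funext fun x => pderivW i x

lemma pderivW1 (i j : Fin 3) (x : Fin 3 → ℝ) :
    pderiv3 j (W1 i) x = (-3 * Real.sqrt 3) *
      ((if i = j then (1:ℝ) else 0) * Fc (-(3:ℝ)/2) x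
        - 9 * (x i * (x j * Fc (-(5:ℝ)/2) x))) := by
  have h1 : HasFDerivAt (fun y : Fin 3 → ℝ => y i * Fc (-(3:ℝ)/2) y)
      (x i • ((-(3:ℝ)/2 * qq x ^ (-(3:ℝ)/2 - 1)) • dq x)
        + Fc (-(3:ℝ)/2) x • (ContinuousLinearMap.proj i : (Fin 3 → ℝ) →L[ℝ] ℝ)) x :=
    (ContinuousLinearMap.proj i : (Fin 3 → ℝ) →L[ℝ] ℝ).hasFDerivAt.mul (hasFD_Fc _ x)
  have hW1 : HasFDerivAt (W1 i) _ x := h1.const_mul (-3 * Real.sqrt 3)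
  rw [pderiv3_eq hW1, ContinuousLinearMap.smul_apply, ContinuousLinearMap.add_apply,
    ContinuousLinearMap.smul_apply, ContinuousLinearMap.smul_apply, dq_apply]
  have : (-(3:ℝ)/2 - 1) = -(5:ℝ)/2 := by norm_num
  rw [this]
  simp [Fc, Pi.single_apply, eq_comm]
  exact Or.inl (by ring)

noncomputable def W2 (i j : Fin 3) (x : Fin 3 → ℝ) : ℝ := (-3 * Real.sqrt 3) *
      ((if i = j then (1:ℝ) else 0) * Fc (-(3:ℝ)/2) x
        - 9 * (x i * (x j * Fc (-(5:ℝ)/2) x)))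

lemma pderivW1_fun (i j : Fin 3) : pderiv3 j (W1 i) = W2 i j := funext fun x => pderivW1 i j x

set_option maxHeartbeats 1000000 in
lemma pderivW2 (i j : Fin 3) (x : Fin 3 → ℝ) :
    pderiv3 j (W2 i j) x = (-3 * Real.sqrt 3) *
      ((if i = j then (1:ℝ) else 0) * (-9 * (x j * Fc (-(5:ℝ)/2) x))
        - 9 * ((if i = j then (1:ℝ) else 0) * (x j * Fc (-(5:ℝ)/2) x)
          + x i * (x j * (-15 * (x j * Fc (-(7:ℝ)/2) x)) + Fc (-(5:ℝ)/2) x))) := by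
  have h3 : HasFDerivAt (fun y : Fin 3 → ℝ => (if i = j then (1:ℝ) else 0) * Fc (-(3:ℝ)/2) y)
      ((if i = j then (1:ℝ) else 0) • ((-(3:ℝ)/2 * qq x ^ (-(3:ℝ)/2 - 1)) • dq x)) x :=
    (hasFD_Fc _ x).const_mul _
  have h5 : HasFDerivAt (fun y : Fin 3 → ℝ => y j * Fc (-(5:ℝ)/2) y)
      (x j • ((-(5:ℝ)/2 * qq x ^ (-(5:ℝ)/2 - 1)) • dq x)
        + Fc (-(5:ℝ)/2) x • (ContinuousLinearMap.proj j : (Fin 3 → ℝ) →L[ℝ] ℝ)) x :=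
    (ContinuousLinearMap.proj j : (Fin 3 → ℝ) →L[ℝ] ℝ).hasFDerivAt.mul (hasFD_Fc _ x)
  have h6 := (ContinuousLinearMap.proj i : (Fin 3 → ℝ) →L[ℝ] ℝ).hasFDerivAt.mul h5
  have h7 : HasFDerivAt (W2 i j) _ x := (h3.sub ((h6.const_mul (9:ℝ)))).const_mul (-3 * Real.sqrt 3)
  rw [pderiv3_eq h7]
  have e3 : (-(3:ℝ)/2 - 1) = -(5:ℝ)/2 := by norm_num
  have e5 : (-(5:ℝ)/2 - 1) = -(7:ℝ)/2 := by norm_num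
  rw [e3, e5]
  simp [Fc, Pi.single_apply, dq_apply, eq_comm,
    apply_ite (fun L : (Fin 3 → ℝ) →L[ℝ] ℝ => L (Pi.single j 1))]
  refine Or.inl ?_
  split_ifs <;> ring

end SolitonAux

set_option maxHeartbeats 1000000 in
/-- `(Δ + 5W⁴)(∂ᵢW) = 0` pointwise on `ℝ³` for each `i`. -/
theorem pderivW_in_kernel_of_linearized_operator :
    ∀ (i : Fin 3) (x : Fin 3 → ℝ),
      laplacian3 (pderiv3 i W) x + 5 * (W x) ^ 4 * pderiv3 i W x = 0 := by
  intro i x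
  open SolitonAux in
  have hA := qq_pos x
  have hsum : laplacian3 (pderiv3 i W) x = ∑ j, pderiv3 j (W2 i j) x := by
    unfold laplacian3
    exact Finset.sum_congr rfl fun j _ => by rw [pderivW_fun i, pderivW1_fun i j]
  have hWq : W x = Real.sqrt 3 * qq x ^ (-(1:ℝ)/2) := rfl
  have hW4 : W x ^ 4 = 9 * qq x ^ (-(2:ℝ)) := by
    have h1 : Real.sqrt 3 ^ 2 = 3 := Real.sq_sqrt (by norm_num)
    have h2 : (qq x ^ (-(1:ℝ)/2)) ^ (4:ℕ) = qq x ^ (-(2:ℝ)) := by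
      rw [← Real.rpow_natCast (qq x ^ (-(1:ℝ)/2)) 4, ← Real.rpow_mul hA.le]
      norm_num
    calc W x ^ 4 = (Real.sqrt 3 ^ 2) ^ 2 * (qq x ^ (-(1:ℝ)/2)) ^ (4:ℕ) := by
          rw [hWq]; ring
      _ = 9 * qq x ^ (-(2:ℝ)) := by rw [h1, h2]; norm_num
  have h37 : qq x ^ (-(2:ℝ)) * Fc (-(3:ℝ)/2) x = qq x ^ (-(7:ℝ)/2) := by
    rw [Fc, ← Real.rpow_add hA]; norm_num
  have hker : 5 * W x ^ 4 * pderiv3 i W x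
      = -135 * (Real.sqrt 3 * (x i * qq x ^ (-(7:ℝ)/2))) := by
    rw [pderivW i x, hW4]
    calc 5 * (9 * qq x ^ (-(2:ℝ))) * (-3 * Real.sqrt 3 * (x i * Fc (-(3:ℝ)/2) x))
        = -135 * (Real.sqrt 3 * (x i * (qq x ^ (-(2:ℝ)) * Fc (-(3:ℝ)/2) x))) := by ring
      _ = _ := by rw [h37]
  have h57 : qq x ^ (-(5:ℝ)/2) = qq x ^ (-(7:ℝ)/2) * qq x := by
    rw [← Real.rpow_add_one hA.ne']; norm_num
  have hqq : qq x = 1 + 3 * (x 0 ^ 2 + x 1 ^ 2 + x 2 ^ 2) := by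
    rw [qq, Fin.sum_univ_three]
  rw [hsum, hker]
  simp only [pderivW2, Fc, Fin.sum_univ_three]
  rw [h57, hqq]
  fin_cases i <;> norm_num <;> simp <;> ring
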